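/- Let (X,𝒳) be a measurable space, Q a Markov kernel on X, g: X × Y → (0,∞) measurable, and y_0,...,y_n a sequence in Y. Suppose C: Y → 𝒳 is a set-valued function such that for all y, y' there exist eps⁻(y,y') > 0 and a measure lambda_{y,y'} with eps⁻(y,y') * lambda_{y,y'}(A ∩ C(y')) <= Q(x, A ∩ C(y')) for all x in C(y) and A in 𝒳. Then for any probability measure nu on X, E_nu^Q[ prod_{i=0}^n g(X_i,y_i) ] >= ( prod_{i=2}^n eps⁻(y_{i-1},y_i) ) * nu[ g(·,y_0) Q( g(·,y_1) 1_{C(y_1)} ) ] * prod_{i=2}^n lambda_{y_{i-1},y_i}[ g(·,y_i) 1_{C(y_i)} ]. -/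

import Mathlib

open MeasureTheory ProbabilityTheory
open scoped ENNReal

/-- The unnormalized smoothing functional: `chainLik Q g n y x` is
`E_x^Q [∏_{i=0}^n g(X_i, y_i)]`, i.e. the iterated integral
`g(x, y_0) ∫ Q(x, dx_1) g(x_1, y_1) ⋯ ∫ Q(x_{n-1}, dx_n) g(x_n, y_n)`. -/
noncomputable def chainLik {X Y : Type*} [MeasurableSpace X]
    (Q : Kernel X X) (g : X → Y → ℝ≥0∞) : ℕ → (ℕ → Y) → X → ℝ≥0∞
  | 0, y, x => g x (y 0)
  | (n + 1), y, x =>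
      g x (y 0) * ∫⁻ x', chainLik Q g n (fun k => y (k + 1)) x' ∂(Q x)

theorem key {X Y : Type*} [MeasurableSpace X]
    (Q : Kernel X X) [IsMarkovKernel Q]
    (g : X → Y → ℝ≥0∞) (hg : ∀ y, Measurable (fun x => g x y))
    (C : Y → Set X) (hC : ∀ y, MeasurableSet (C y))
    (eps : Y → Y → ℝ≥0∞)
    (lam : Y → Y → Measure X)
    (hLD : ∀ y y', ∀ A : Set X, MeasurableSet A → ∀ x ∈ C y,
      eps y y' * lam y y' (A ∩ C y') ≤ Q x (A ∩ C y'))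
    (m : ℕ) : ∀ (y : ℕ → Y), ∀ x ∈ C (y 0),
    g x (y 0) * ((∏ i ∈ Finset.range m, eps (y i) (y (i+1))) *
      ∏ i ∈ Finset.range m,
        ∫⁻ z, (C (y (i+1))).indicator (fun z => g z (y (i+1))) z ∂(lam (y i) (y (i+1))))
      ≤ chainLik Q g m y x := by
  induction m with
  | zero => intro y x hx; simp [chainLik]
  | succ m ih =>
    intro y x hx
    set y' : ℕ → Y := fun k => y (k + 1) with hy'
    set P : ℝ≥0∞ := (∏ i ∈ Finset.range m, eps (y' i) (y' (i+1))) *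
      ∏ i ∈ Finset.range m,
        ∫⁻ z, (C (y' (i+1))).indicator (fun z => g z (y' (i+1))) z ∂(lam (y' i) (y' (i+1)))
      with hP
    have h1 : ∫⁻ z, (C (y 1)).indicator (fun z => g z (y 1) * P) z ∂(Q x)
        ≤ ∫⁻ z, chainLik Q g m y' z ∂(Q x) := by
      refine lintegral_mono fun z => ?_
      by_cases hz : z ∈ C (y 1)
      · simpa [Set.indicator_of_mem hz] using ih y' z hz
      · simp [Set.indicator_of_notMem hz]
    have h2 : ∫⁻ z, (C (y 1)).indicator (fun z => g z (y 1) * P) z ∂(Q x)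
        = (∫⁻ z, (C (y 1)).indicator (fun z => g z (y 1)) z ∂(Q x)) * P := by
      rw [← lintegral_mul_const P ((hg _).indicator (hC _))]
      refine lintegral_congr fun z => ?_
      by_cases hz : z ∈ C (y 1) <;> simp [hz]
    have h3 : eps (y 0) (y 1) * ∫⁻ z, (C (y 1)).indicator (fun z => g z (y 1)) z ∂(lam (y 0) (y 1))
        ≤ ∫⁻ z, (C (y 1)).indicator (fun z => g z (y 1)) z ∂(Q x) := by
      rw [lintegral_indicator (hC _), lintegral_indicator (hC _), ← smul_eq_mul, ← lintegral_smul_measure]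
      refine lintegral_mono' ?_ le_rfl
      refine Measure.le_iff.2 fun s hs => ?_
      rw [Measure.smul_apply, Measure.restrict_apply hs, Measure.restrict_apply hs, smul_eq_mul]
      exact hLD (y 0) (y 1) s hs x hx
    have hsplit : (∏ i ∈ Finset.range (m+1), eps (y i) (y (i+1))) *
        ∏ i ∈ Finset.range (m+1),
          ∫⁻ z, (C (y (i+1))).indicator (fun z => g z (y (i+1))) z ∂(lam (y i) (y (i+1)))
        = (eps (y 0) (y 1) *
            ∫⁻ z, (C (y 1)).indicator (fun z => g z (y 1)) z ∂(lam (y 0) (y 1))) * P := by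
      rw [Finset.prod_range_succ' (fun i => eps (y i) (y (i+1))) m,
          Finset.prod_range_succ' (fun i =>
            ∫⁻ z, (C (y (i+1))).indicator (fun z => g z (y (i+1))) z ∂(lam (y i) (y (i+1)))) m]
      simp only [hP, hy']
      ring
    show g x (y 0) * _ ≤ g x (y 0) * ∫⁻ z, chainLik Q g m y' z ∂(Q x)
    rw [hsplit]
    refine mul_le_mul_right ?_ _
    calc eps (y 0) (y 1) *
          (∫⁻ z, (C (y 1)).indicator (fun z => g z (y 1)) z ∂(lam (y 0) (y 1))) * P
        ≤ (∫⁻ z, (C (y 1)).indicator (fun z => g z (y 1)) z ∂(Q x)) * P :=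
          mul_le_mul_left h3 P
      _ = ∫⁻ z, (C (y 1)).indicator (fun z => g z (y 1) * P) z ∂(Q x) := h2.symm
      _ ≤ _ := h1

/-- Proposition 3: lower bound for the unnormalized likelihood
`E_ν^Q[∏_{i=0}^n g(X_i, y_i)]` in terms of a Local Doeblin set function `C`
with lower constants `ε⁻(y,y')` and minorizing measures `λ_{y,y'}`. -/
theorem stmt4 {X Y : Type*} [MeasurableSpace X]
    (Q : Kernel X X) [IsMarkovKernel Q]
    (g : X → Y → ℝ≥0∞) (hg : ∀ y, Measurable (fun x => g x y))
    (C : Y → Set X) (hC : ∀ y, MeasurableSet (C y))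
    (eps : Y → Y → ℝ≥0∞) (heps : ∀ y y', 0 < eps y y')
    (lam : Y → Y → Measure X)
    (hLD : ∀ y y', ∀ A : Set X, MeasurableSet A → ∀ x ∈ C y,
      eps y y' * lam y y' (A ∩ C y') ≤ Q x (A ∩ C y'))
    (ν : Measure X) [IsProbabilityMeasure ν]
    (y : ℕ → Y) (n : ℕ) (hn : 1 ≤ n) :
    (∏ i ∈ Finset.Icc 2 n, eps (y (i - 1)) (y i)) *
        (∫⁻ x, g x (y 0) *
          ∫⁻ x', (C (y 1)).indicator (fun x'' => g x'' (y 1)) x' ∂(Q x) ∂ν) *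
        ∏ i ∈ Finset.Icc 2 n,
          ∫⁻ x, (C (y i)).indicator (fun x'' => g x'' (y i)) x
            ∂(lam (y (i - 1)) (y i)) ≤
      ∫⁻ x, chainLik Q g n y x ∂ν := by

  obtain ⟨m, rfl⟩ : ∃ m, n = m + 1 := ⟨n - 1, by omega⟩
  set y' : ℕ → Y := fun k => y (k + 1) with hy'
  set P : ℝ≥0∞ := (∏ i ∈ Finset.range m, eps (y' i) (y' (i+1))) *
      ∏ i ∈ Finset.range m,
        ∫⁻ z, (C (y' (i+1))).indicator (fun z => g z (y' (i+1))) z ∂(lam (y' i) (y' (i+1)))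
      with hP
  have hA : ∏ i ∈ Finset.Icc 2 (m+1), eps (y (i - 1)) (y i)
      = ∏ i ∈ Finset.range m, eps (y' i) (y' (i+1)) := by
    rw [← Finset.Ico_add_one_right_eq_Icc, Finset.prod_Ico_eq_prod_range]
    refine Finset.prod_congr (by congr 1) fun i _ => ?_
    have h1 : 2 + i - 1 = i + 1 := by omega
    have h2 : 2 + i = i + 1 + 1 := by omega
    rw [h1, h2]
  have hB : (∏ i ∈ Finset.Icc 2 (m+1),
        ∫⁻ x, (C (y i)).indicator (fun x'' => g x'' (y i)) x ∂(lam (y (i - 1)) (y i)))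
      = ∏ i ∈ Finset.range m,
        ∫⁻ z, (C (y' (i+1))).indicator (fun z => g z (y' (i+1))) z ∂(lam (y' i) (y' (i+1))) := by
    rw [← Finset.Ico_add_one_right_eq_Icc, Finset.prod_Ico_eq_prod_range]
    refine Finset.prod_congr (by congr 1) fun i _ => ?_
    have h1 : 2 + i - 1 = i + 1 := by omega
    have h2 : 2 + i = i + 1 + 1 := by omega
    rw [h1, h2]
  rw [hA, hB]
  have hrearr : (∏ i ∈ Finset.range m, eps (y' i) (y' (i+1))) *
      (∫⁻ x, g x (y 0) *
          ∫⁻ x', (C (y 1)).indicator (fun x'' => g x'' (y 1)) x' ∂(Q x) ∂ν) *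
      (∏ i ∈ Finset.range m,
        ∫⁻ z, (C (y' (i+1))).indicator (fun z => g z (y' (i+1))) z ∂(lam (y' i) (y' (i+1))))
      = P * ∫⁻ x, g x (y 0) *
          ∫⁻ x', (C (y 1)).indicator (fun x'' => g x'' (y 1)) x' ∂(Q x) ∂ν := by
    rw [hP]; ring
  rw [hrearr]
  calc P * ∫⁻ x, g x (y 0) *
          ∫⁻ x', (C (y 1)).indicator (fun x'' => g x'' (y 1)) x' ∂(Q x) ∂ν
      ≤ ∫⁻ x, P * (g x (y 0) *
          ∫⁻ x', (C (y 1)).indicator (fun x'' => g x'' (y 1)) x' ∂(Q x)) ∂ν :=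
        lintegral_const_mul_le _ _
    _ ≤ ∫⁻ x, chainLik Q g (m+1) y x ∂ν := by
        refine lintegral_mono fun x => ?_
        show _ ≤ g x (y 0) * ∫⁻ x', chainLik Q g m y' x' ∂(Q x)
        have h2 : ∫⁻ z, (C (y 1)).indicator (fun z => g z (y 1) * P) z ∂(Q x)
            = (∫⁻ z, (C (y 1)).indicator (fun z => g z (y 1)) z ∂(Q x)) * P := by
          rw [← lintegral_mul_const P ((hg _).indicator (hC _))]
          refine lintegral_congr fun z => ?_
          by_cases hz : z ∈ C (y 1) <;> simp [hz]
        have h1 : ∫⁻ z, (C (y 1)).indicator (fun z => g z (y 1) * P) z ∂(Q x)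
            ≤ ∫⁻ z, chainLik Q g m y' z ∂(Q x) := by
          refine lintegral_mono fun z => ?_
          by_cases hz : z ∈ C (y 1)
          · simpa [Set.indicator_of_mem hz] using
              key Q g hg C hC eps lam hLD m y' z hz
          · simp [Set.indicator_of_notMem hz]
        calc P * (g x (y 0) *
              ∫⁻ x', (C (y 1)).indicator (fun x'' => g x'' (y 1)) x' ∂(Q x))
            = g x (y 0) *
              ((∫⁻ x', (C (y 1)).indicator (fun x'' => g x'' (y 1)) x' ∂(Q x)) * P) := by ring
          _ ≤ g x (y 0) * ∫⁻ x', chainLik Q g m y' x' ∂(Q x) :=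
              mul_le_mul_right (h2 ▸ h1) _
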